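/- There exists a function f : ℕ → ℕ such that the following holds. Let G be a group such that every tensor x ∈ T⊗(G) has centralizer C_{ν(G)}(x) of finite index in ν(G), and suppose m is the maximum over x ∈ T⊗(G) of the index of C_{[G,G^φ]}(x) in [G,G^φ]. Then for every tensor x ∈ T⊗(G), the subgroup [[G,G^φ], x] is finite of order at most f(m). -/

import Mathlib

namespace TensorNu

universe u

/-- The commutator `[x,y] = x⁻¹y⁻¹xy`. -/
def comm {K : Type*} [Group K] (x y : K) : K := x⁻¹ * y⁻¹ * x * y

/-- Conjugation `x^y = y⁻¹xy`. -/
def conj {K : Type*} [Group K] (x y : K) : K := y⁻¹ * x * y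

variable (G : Type u) [Group G]

/-- The defining relators of `ν(G)`, as elements of the free group on `G ⊕ G`,
where `Sum.inl` corresponds to the canonical copy of `G` and `Sum.inr` to the
isomorphic copy `G^φ` (`g ↦ g^φ`).  They comprise the multiplication tables of
`G` and of `G^φ`, together with the relations
`[g₁,g₂^φ]^{g₃} = [g₁^{g₃},(g₂^{g₃})^φ]` and `[g₁,g₂^φ]^{g₃} = [g₁,g₂^φ]^{g₃^φ}`. -/
def nuRels : Set (FreeGroup (G ⊕ G)) :=
  {r | (∃ g h : G, r = FreeGroup.of (Sum.inl g) * FreeGroup.of (Sum.inl h) *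
          (FreeGroup.of (Sum.inl (g * h)))⁻¹)
     ∨ (∃ g h : G, r = FreeGroup.of (Sum.inr g) * FreeGroup.of (Sum.inr h) *
          (FreeGroup.of (Sum.inr (g * h)))⁻¹)
     ∨ (∃ g₁ g₂ g₃ : G, r =
          conj (comm (FreeGroup.of (Sum.inl g₁)) (FreeGroup.of (Sum.inr g₂)))
              (FreeGroup.of (Sum.inl g₃)) *
            (comm (FreeGroup.of (Sum.inl (conj g₁ g₃)))
              (FreeGroup.of (Sum.inr (conj g₂ g₃))))⁻¹)
     ∨ (∃ g₁ g₂ g₃ : G, r =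
          conj (comm (FreeGroup.of (Sum.inl g₁)) (FreeGroup.of (Sum.inr g₂)))
              (FreeGroup.of (Sum.inl g₃)) *
            (conj (comm (FreeGroup.of (Sum.inl g₁)) (FreeGroup.of (Sum.inr g₂)))
              (FreeGroup.of (Sum.inr g₃)))⁻¹)}

/-- The group `ν(G)`. -/
abbrev Nu := PresentedGroup (nuRels G)

/-- The canonical image of `g ∈ G` in `ν(G)`. -/
def ι (g : G) : Nu G := PresentedGroup.of (Sum.inl g)

/-- The canonical image `g^φ` of `g ∈ G` (via the copy `G^φ`) in `ν(G)`. -/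
def ιφ (g : G) : Nu G := PresentedGroup.of (Sum.inr g)

/-- The set `T⊗(G)` of tensors `[a, b^φ]`, `a, b ∈ G`. -/
def tensorSet : Set (Nu G) := {x | ∃ a b : G, x = comm (ι G a) (ιφ G b)}

/-- The image of `G` in `ν(G)` as a subgroup. -/
def GSub : Subgroup (Nu G) := Subgroup.closure (Set.range (ι G))

/-- The image of `G^φ` in `ν(G)` as a subgroup. -/
def GφSub : Subgroup (Nu G) := Subgroup.closure (Set.range (ιφ G))

/-- The non-abelian tensor square `[G, G^φ] ≤ ν(G)`. -/
def tensorSquare : Subgroup (Nu G) := ⁅GSub G, GφSub G⁆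

/-- `[S, x]`: the subgroup generated by the commutators `[s, x]`, `s ∈ S`. -/
def commSub {K : Type*} [Group K] (S : Set K) (x : K) : Subgroup K :=
  Subgroup.closure {c | ∃ s ∈ S, c = comm s x}

end TensorNu

namespace TensorNu

universe u

open scoped commutatorElement

section CommConj

variable {K : Type*} {L : Type*} [Group K] [Group L]

lemma map_conj (f : K →* L) (a b : K) : f (conj a b) = conj (f a) (f b) := by
  simp [conj]

lemma map_comm (f : K →* L) (a b : K) : f (comm a b) = comm (f a) (f b) := by
  simp [comm]

lemma comm_eq (x y : K) : comm x y = (conj y x)⁻¹ * y := by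
  simp [comm, conj, mul_assoc]

lemma conj_conj (t u v : K) : conj (conj t u) v = conj t (u * v) := by
  simp [conj, mul_assoc]

lemma conj_one (t : K) : conj t 1 = t := by simp [conj]

lemma conj_one_left (v : K) : conj 1 v = 1 := by simp [conj]

lemma conj_mul_left (a b v : K) : conj (a * b) v = conj a v * conj b v := by
  simp [conj, mul_assoc]

lemma conj_inv_left (a v : K) : conj a⁻¹ v = (conj a v)⁻¹ := by
  simp [conj, mul_assoc]

lemma comm_one_left (y : K) : comm 1 y = 1 := by simp [comm]

lemma comm_mul (u v y : K) :
    comm (u * v) y = comm (conj u v) (conj y v) * comm v y := by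
  simp [comm, conj, mul_assoc]

lemma comm_inv (u y : K) : comm u⁻¹ y = (comm u (conj y u⁻¹))⁻¹ := by
  simp [comm, conj, mul_assoc]

lemma comm_eq_commutatorElement (x y : K) : comm x y = ⁅x⁻¹, y⁻¹⁆ := by
  simp [comm, commutatorElement_def]

lemma commEl_mul_left (a b c : K) : ⁅a * b, c⁆ = conj ⁅b, c⁆ a⁻¹ * ⁅a, c⁆ := by
  simp only [conj, commutatorElement_def]; group

lemma commEl_inv_left (a c : K) : ⁅a⁻¹, c⁆ = conj ⁅a, c⁆⁻¹ a := by
  simp only [conj, commutatorElement_def]; group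

lemma commEl_mul_right (a b c : K) : ⁅a, b * c⁆ = ⁅a, b⁆ * conj ⁅a, c⁆ b⁻¹ := by
  simp only [conj, commutatorElement_def]; group

lemma commEl_inv_right (a c : K) : ⁅a, c⁻¹⁆ = conj ⁅a, c⁆⁻¹ c := by
  simp only [conj, commutatorElement_def]; group

end CommConj

variable {G : Type u} [Group G]

lemma mk_rel_eq_one {r : FreeGroup (G ⊕ G)} (h : r ∈ nuRels G) :
    PresentedGroup.mk (nuRels G) r = 1 :=
  (QuotientGroup.eq_one_iff _).mpr (Subgroup.subset_normalClosure h)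

lemma mk_of_inl (g : G) : PresentedGroup.mk (nuRels G) (FreeGroup.of (Sum.inl g)) = ι G g := rfl

lemma mk_of_inr (g : G) : PresentedGroup.mk (nuRels G) (FreeGroup.of (Sum.inr g)) = ιφ G g := rfl

lemma ι_mul (g h : G) : ι G g * ι G h = ι G (g * h) := by
  have h1 := mk_rel_eq_one (G := G) (Or.inl ⟨g, h, rfl⟩)
  rw [map_mul, map_mul, map_inv, mk_of_inl, mk_of_inl, mk_of_inl, mul_inv_eq_one] at h1
  exact h1

lemma ιφ_mul (g h : G) : ιφ G g * ιφ G h = ιφ G (g * h) := by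
  have h1 := mk_rel_eq_one (G := G) (Or.inr (Or.inl ⟨g, h, rfl⟩))
  rw [map_mul, map_mul, map_inv, mk_of_inr, mk_of_inr, mk_of_inr, mul_inv_eq_one] at h1
  exact h1

/-- `ι` as a monoid hom. -/
def ιHom : G →* Nu G where
  toFun := ι G
  map_one' := by
    have := ι_mul (G := G) 1 1
    rw [mul_one] at this
    exact left_eq_mul.mp this.symm
  map_mul' g h := (ι_mul g h).symm

def ιφHom : G →* Nu G where
  toFun := ιφ G
  map_one' := by
    have := ιφ_mul (G := G) 1 1
    rw [mul_one] at this
    exact left_eq_mul.mp this.symm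
  map_mul' g h := (ιφ_mul g h).symm

lemma ι_inv (g : G) : ι G g⁻¹ = (ι G g)⁻¹ := map_inv ιHom g

lemma ιφ_inv (g : G) : ιφ G g⁻¹ = (ιφ G g)⁻¹ := map_inv ιφHom g

lemma conj_tensor_ι (a b g : G) :
    conj (comm (ι G a) (ιφ G b)) (ι G g) = comm (ι G (conj a g)) (ιφ G (conj b g)) := by
  have h1 := mk_rel_eq_one (G := G) (Or.inr (Or.inr (Or.inl ⟨a, b, g, rfl⟩)))
  rw [map_mul, map_inv, map_conj, map_comm, map_comm, mk_of_inl, mk_of_inl, mk_of_inl,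
    mk_of_inr, mk_of_inr, mul_inv_eq_one] at h1
  exact h1

lemma conj_tensor_ιφ (a b g : G) :
    conj (comm (ι G a) (ιφ G b)) (ιφ G g) = conj (comm (ι G a) (ιφ G b)) (ι G g) := by
  have h1 := mk_rel_eq_one (G := G) (Or.inr (Or.inr (Or.inr ⟨a, b, g, rfl⟩)))
  rw [map_mul, map_inv, map_conj, map_conj, map_comm, mk_of_inl, mk_of_inl,
    mk_of_inr, mk_of_inr, mul_inv_eq_one] at h1
  exact h1.symm



lemma tensor_mem_tensorSquare {t : Nu G} (ht : t ∈ tensorSet G) : t ∈ tensorSquare G := by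
  obtain ⟨a, b, rfl⟩ := ht
  rw [comm_eq_commutatorElement]
  exact Subgroup.commutator_mem_commutator
    ((GSub G).inv_mem (Subgroup.subset_closure ⟨a, rfl⟩))
    ((GφSub G).inv_mem (Subgroup.subset_closure ⟨b, rfl⟩))

/-- The conjugation-stable subgroup used to prove tensors are closed under conjugation. -/
private def conjStab : Subgroup (Nu G) where
  carrier := {w | ∀ t ∈ tensorSet G, conj t w ∈ tensorSet G ∧ conj t w⁻¹ ∈ tensorSet G}
  one_mem' := by
    intro t ht
    rw [inv_one, conj_one]
    exact ⟨ht, ht⟩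
  mul_mem' := by
    intro a b ha hb t ht
    constructor
    · rw [← conj_conj]
      exact (hb _ (ha t ht).1).1
    · rw [mul_inv_rev, ← conj_conj]
      exact (ha _ (hb t ht).2).2
  inv_mem' := by
    intro a ha t ht
    refine ⟨(ha t ht).2, ?_⟩
    rw [inv_inv]
    exact (ha t ht).1

lemma conjStab_eq_top : conjStab (G := G) = ⊤ := by
  rw [eq_top_iff, ← PresentedGroup.closure_range_of (nuRels G), Subgroup.closure_le]
  rintro - ⟨y, rfl⟩
  rcases y with g | g
  · intro t ht
    obtain ⟨a, b, rfl⟩ := ht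
    constructor
    · exact ⟨conj a g, conj b g, (conj_tensor_ι a b g)⟩
    · rw [show (PresentedGroup.of (Sum.inl g) : Nu G)⁻¹ = ι G g⁻¹ from (ι_inv g).symm]
      exact ⟨conj a g⁻¹, conj b g⁻¹, (conj_tensor_ι a b g⁻¹)⟩
  · intro t ht
    obtain ⟨a, b, rfl⟩ := ht
    constructor
    · rw [show (PresentedGroup.of (Sum.inr g) : Nu G) = ιφ G g from rfl, conj_tensor_ιφ]
      exact ⟨conj a g, conj b g, (conj_tensor_ι a b g)⟩
    · rw [show (PresentedGroup.of (Sum.inr g) : Nu G)⁻¹ = ιφ G g⁻¹ from (ιφ_inv g).symm,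
        conj_tensor_ιφ]
      exact ⟨conj a g⁻¹, conj b g⁻¹, (conj_tensor_ι a b g⁻¹)⟩

lemma conj_tensor_mem {t : Nu G} (ht : t ∈ tensorSet G) (w : Nu G) :
    conj t w ∈ tensorSet G := by
  have hw : w ∈ conjStab (G := G) := by rw [conjStab_eq_top]; trivial
  exact (hw t ht).1




lemma conj_mem_closure_tensorSet {n : Nu G} (hn : n ∈ Subgroup.closure (tensorSet G))
    (w : Nu G) : conj n w ∈ Subgroup.closure (tensorSet G) := by
  refine Subgroup.closure_induction
    (fun t ht => fun w => Subgroup.subset_closure (conj_tensor_mem ht w))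
    (fun w => by rw [conj_one_left]; exact one_mem _)
    (fun a b _ _ iha ihb w => by rw [conj_mul_left]; exact mul_mem (iha w) (ihb w))
    (fun a _ iha w => by rw [conj_inv_left]; exact inv_mem (iha w)) hn w

lemma closure_tensorSet_normal : (Subgroup.closure (tensorSet G)).Normal := by
  constructor
  intro n hn g
  have h2 := conj_mem_closure_tensorSet hn g⁻¹
  simpa [conj, inv_inv] using h2

lemma base_tensor (g h : G) : ⁅ι G g, ιφ G h⁆ ∈ tensorSet G := by
  refine ⟨g⁻¹, h⁻¹, ?_⟩
  simp [comm, ι_inv, ιφ_inv, commutatorElement_def, mul_assoc]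

lemma tensorSquare_eq_closure : tensorSquare G = Subgroup.closure (tensorSet G) := by
  apply le_antisymm
  · rw [tensorSquare, Subgroup.commutator_le]
    intro u hu v hv
    revert v
    refine Subgroup.closure_induction (p := fun u _ => ∀ v ∈ GφSub G,
        ⁅u, v⁆ ∈ Subgroup.closure (tensorSet G)) ?_ ?_ ?_ ?_ hu
    · rintro - ⟨g, rfl⟩ v hv
      refine Subgroup.closure_induction (p := fun v _ =>
          ⁅ι G g, v⁆ ∈ Subgroup.closure (tensorSet G)) ?_ ?_ ?_ ?_ hv
      · rintro - ⟨h, rfl⟩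
        exact Subgroup.subset_closure (base_tensor g h)
      · simpa using one_mem _
      · intro a b _ _ iha ihb
        rw [commEl_mul_right]
        exact mul_mem iha (conj_mem_closure_tensorSet ihb _)
      · intro a _ iha
        rw [commEl_inv_right]
        exact conj_mem_closure_tensorSet (inv_mem iha) _
    · intro v hv; simpa using one_mem _
    · intro a b _ _ iha ihb v hv
      rw [commEl_mul_left]
      exact mul_mem (conj_mem_closure_tensorSet (ihb v hv) _) (iha v hv)
    · intro a _ iha v hv
      rw [commEl_inv_left]
      exact conj_mem_closure_tensorSet (inv_mem (iha v hv)) _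
  · rw [Subgroup.closure_le]
    exact fun t ht => tensor_mem_tensorSquare ht

section Generic

open Subgroup Pointwise

/-- Commutators depend only on cosets modulo the center:
    bounded center index gives a bounded set of commutators. -/
lemma commutatorSet_card_le (Γ : Type*) [Group Γ]
    (hq : (Subgroup.center Γ).index ≠ 0) :
    Finite (commutatorSet Γ) ∧ Nat.card (commutatorSet Γ) ≤ (Subgroup.center Γ).index ^ 2 := by
  haveI : (Subgroup.center Γ).FiniteIndex := ⟨hq⟩
  have wd : ∀ (a₁ b₁ a₂ b₂ : Γ),
      (QuotientGroup.leftRel (Subgroup.center Γ)) a₁ a₂ →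
      (QuotientGroup.leftRel (Subgroup.center Γ)) b₁ b₂ →
      ⁅a₁, b₁⁆ = ⁅a₂, b₂⁆ := by
    intro a₁ b₁ a₂ b₂ h1 h2
    rw [QuotientGroup.leftRel_apply] at h1 h2
    have e1 : a₂ = a₁ * (a₁⁻¹ * a₂) := by group
    have e2 : b₂ = b₁ * (b₁⁻¹ * b₂) := by group
    have hz : ∀ g : Γ, Commute (a₁⁻¹ * a₂) g :=
      fun g => ((Subgroup.mem_center_iff.mp h1) g).symm
    have hw : Commute a₁ (b₁⁻¹ * b₂) := (Subgroup.mem_center_iff.mp h2) a₁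
    rw [e1, e2, commEl_mul_left,
      commutatorElement_eq_one_iff_commute.mpr (hz (b₁ * (b₁⁻¹ * b₂))),
      conj_one_left, one_mul, commEl_mul_right,
      commutatorElement_eq_one_iff_commute.mpr hw, conj_one_left, mul_one]
  let F : Γ ⧸ Subgroup.center Γ → Γ ⧸ Subgroup.center Γ → Γ :=
    Quotient.lift₂ (fun a b => ⁅a, b⁆) wd
  have hF : ∀ a b : Γ, F (QuotientGroup.mk a) (QuotientGroup.mk b) = ⁅a, b⁆ := fun _ _ => rfl
  have hFmem : ∀ q₁ q₂, F q₁ q₂ ∈ commutatorSet Γ := by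
    intro q₁ q₂
    induction q₁ using QuotientGroup.induction_on with | _ a =>
    induction q₂ using QuotientGroup.induction_on with | _ b =>
    exact ⟨a, b, (hF a b).symm⟩
  let F' : (Γ ⧸ Subgroup.center Γ) × (Γ ⧸ Subgroup.center Γ) → commutatorSet Γ :=
    fun p => ⟨F p.1 p.2, hFmem _ _⟩
  have hsurj : Function.Surjective F' := by
    rintro ⟨c, a, b, rfl⟩
    exact ⟨(QuotientGroup.mk a, QuotientGroup.mk b), Subtype.ext (hF a b)⟩
  haveI : Finite ((Γ ⧸ Subgroup.center Γ) × (Γ ⧸ Subgroup.center Γ)) := by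
    haveI := Subgroup.finite_quotient_of_finiteIndex (H := Subgroup.center Γ)
    infer_instance
  refine ⟨Finite.of_surjective F' hsurj, ?_⟩
  calc Nat.card (commutatorSet Γ) ≤
      Nat.card ((Γ ⧸ Subgroup.center Γ) × (Γ ⧸ Subgroup.center Γ)) :=
        Nat.card_le_card_of_surjective F' hsurj
    _ = (Subgroup.center Γ).index ^ 2 := by
        rw [Nat.card_prod, sq, Subgroup.index]

lemma relindex_finset_inf {A : Type*} {Γ : Type*} [Group Γ] (s : Finset A)
    (fc : A → Subgroup Γ) (K : Subgroup Γ) (c : ℕ)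
    (h : ∀ a ∈ s, (fc a).relIndex K ≤ c ∧ (fc a).relIndex K ≠ 0) :
    (s.inf fc).relIndex K ≤ c ^ s.card ∧ (s.inf fc).relIndex K ≠ 0 := by
  classical
  induction s using Finset.induction_on with
  | empty => simp [Subgroup.relIndex_top_left]
  | insert a s ha ih =>
    have ih' := ih (fun b hb => h b (Finset.mem_insert_of_mem hb))
    have ha' := h a (Finset.mem_insert_self a s)
    rw [Finset.inf_insert, Finset.card_insert_of_notMem ha]
    constructor
    · calc ((fc a) ⊓ s.inf fc).relIndex K ≤
          (fc a).relIndex K * (s.inf fc).relIndex K := Subgroup.relIndex_inf_le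
        _ ≤ c * c ^ s.card := Nat.mul_le_mul ha'.1 ih'.1
        _ = c ^ (s.card + 1) := (pow_succ' c s.card).symm
    · exact Subgroup.relIndex_inf_ne_zero ha'.2 ih'.2

lemma card_sup_le {A : Type*} [CommGroup A] (P Q : Subgroup A)
    (hP : Finite P) (hQ : Finite Q) :
    Finite ↥(P ⊔ Q) ∧ Nat.card ↥(P ⊔ Q) ≤ Nat.card P * Nat.card Q := by
  have hmul : ((P ⊔ Q : Subgroup A) : Set A) = (P : Set A) * (Q : Set A) := Subgroup.mul_normal P Q
  let f : P × Q → ↥(P ⊔ Q) := fun p =>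
    ⟨↑p.1 * ↑p.2, mul_mem (SetLike.le_def.mp le_sup_left p.1.2)
      (SetLike.le_def.mp le_sup_right p.2.2)⟩
  have hsurj : Function.Surjective f := by
    rintro ⟨z, hz⟩
    have hz' : z ∈ ((P : Set A) * (Q : Set A)) := by rw [← hmul]; exact hz
    obtain ⟨p, hp, q, hq, hpq⟩ := hz'
    exact ⟨(⟨p, hp⟩, ⟨q, hq⟩), Subtype.ext hpq⟩
  refine ⟨Finite.of_surjective f hsurj, ?_⟩
  calc Nat.card ↥(P ⊔ Q) ≤ Nat.card (P × Q) := Nat.card_le_card_of_surjective f hsurj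
    _ = Nat.card P * Nat.card Q := Nat.card_prod _ _

lemma card_closure_finset_le {A : Type*} [CommGroup A] (E : ℕ) (hE : E ≠ 0) (t : Finset A)
    (h : ∀ a ∈ t, a ^ E = 1) :
    Finite (Subgroup.closure (t : Set A)) ∧
    Nat.card (Subgroup.closure (t : Set A)) ≤ E ^ t.card := by
  classical
  induction t using Finset.induction_on with
  | empty =>
    rw [Finset.coe_empty, Subgroup.closure_empty]
    constructor
    · infer_instance
    · simp [Subgroup.card_bot]
  | insert a s ha ih =>
    have ih' := ih (fun b hb => h b (Finset.mem_insert_of_mem hb))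
    have hfa : IsOfFinOrder a :=
      isOfFinOrder_iff_pow_eq_one.mpr
        ⟨E, Nat.pos_of_ne_zero hE, h a (Finset.mem_insert_self a s)⟩
    have hfinP : Finite ↥(Subgroup.zpowers a) := hfa.finite_zpowers.to_subtype
    have hcardP : Nat.card ↥(Subgroup.zpowers a) ≤ E := by
      rw [Nat.card_zpowers]
      exact Nat.le_of_dvd (Nat.pos_of_ne_zero hE)
        (orderOf_dvd_of_pow_eq_one (h a (Finset.mem_insert_self a s)))
    rw [Finset.coe_insert, Set.insert_eq, Subgroup.closure_union,
      Finset.card_insert_of_notMem ha]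
    rw [← Subgroup.zpowers_eq_closure]
    obtain ⟨hfin2, hcard2⟩ := ih'
    obtain ⟨hfin3, hcard3⟩ := card_sup_le _ _ hfinP hfin2
    refine ⟨hfin3, ?_⟩
    calc Nat.card ↥(Subgroup.zpowers a ⊔ Subgroup.closure (s : Set A)) ≤
        Nat.card ↥(Subgroup.zpowers a) * Nat.card (Subgroup.closure (s : Set A)) := hcard3
      _ ≤ E * E ^ s.card := Nat.mul_le_mul hcardP hcard2
      _ = E ^ (s.card + 1) := (pow_succ' E s.card).symm


lemma card_commutator_closure_le {Γ : Type*} [Group Γ] (S : Set Γ) (hfin : S.Finite)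
    (n c : ℕ) (hc1 : 1 ≤ c) (hn : Nat.card S ≤ n)
    (h : ∀ s ∈ S, (Subgroup.centralizer {s}).relIndex (Subgroup.closure S) ≤ c ∧
        (Subgroup.centralizer {s}).relIndex (Subgroup.closure S) ≠ 0) :
    Finite (_root_.commutator ↥(Subgroup.closure S)) ∧
    ∃ q ≤ (c ^ n) ^ 2,
      Nat.card (_root_.commutator ↥(Subgroup.closure S)) ≤ Subgroup.cardCommutatorBound q := by
  classical
  set K := Subgroup.closure S with hK
  have htcard : hfin.toFinset.card ≤ n := by
    rw [← Set.ncard_coe_finset, hfin.coe_toFinset, ← Nat.card_coe_set_eq]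
    exact hn
  have hZ := relindex_finset_inf hfin.toFinset (fun s => Subgroup.centralizer {s}) K c
      (fun a ha => h a (hfin.mem_toFinset.mp ha))
  set Z := hfin.toFinset.inf (fun s => Subgroup.centralizer {s}) with hZdef
  have hZle : Z.relIndex K ≤ c ^ n := hZ.1.trans (Nat.pow_le_pow_right hc1 htcard)
  have hZne : Z.relIndex K ≠ 0 := hZ.2
  have hcen : Z.subgroupOf K ≤ Subgroup.center ↥K := by
    intro z hz
    rw [Subgroup.mem_center_iff]
    intro k
    have hzc : (z : Γ) ∈ Z := hz
    have hKle : K ≤ Subgroup.centralizer {(z : Γ)} := by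
      refine (Subgroup.closure_le _).mpr ?_
      intro s hs
      rw [SetLike.mem_coe, Subgroup.mem_centralizer_iff]
      intro g hg
      rw [Set.mem_singleton_iff] at hg
      subst hg
      have hmem : (z : Γ) ∈ Subgroup.centralizer {s} :=
        (Finset.inf_le (hfin.mem_toFinset.mpr hs) : Z ≤ Subgroup.centralizer {s}) hzc
      exact (Subgroup.mem_centralizer_iff.mp hmem s (Set.mem_singleton s)).symm
    have hcomm := Subgroup.mem_centralizer_iff.mp (hKle k.2) (z : Γ) (Set.mem_singleton _)
    exact Subtype.ext hcomm.symm
  have hdvd : (Subgroup.center ↥K).index ∣ Z.relIndex K :=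
    Subgroup.index_dvd_of_le hcen
  have hcne : (Subgroup.center ↥K).index ≠ 0 := by
    intro h0
    rw [h0] at hdvd
    exact hZne (Nat.eq_zero_of_zero_dvd hdvd)
  have hcle : (Subgroup.center ↥K).index ≤ c ^ n :=
    (Nat.le_of_dvd (Nat.pos_of_ne_zero hZne) hdvd).trans hZle
  obtain ⟨hfinCS, hcardCS⟩ := commutatorSet_card_le ↥K hcne
  haveI := hfinCS
  refine ⟨inferInstance, Nat.card (commutatorSet ↥K), ?_, ?_⟩
  · exact hcardCS.trans (Nat.pow_le_pow_left hcle 2)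
  · exact Subgroup.card_commutator_le_of_finite_commutatorSet ↥K

lemma conj_comm_aux {Γ : Type*} [Group Γ] (x u v : Γ)
    (h : x * (u⁻¹ * v) = (u⁻¹ * v) * x) : u * x * u⁻¹ = v * x * v⁻¹ := by
  have h2 := congrArg (fun t => u * t * v⁻¹) h
  simp only [mul_assoc] at h2
  simpa [mul_assoc] using h2

lemma orbit_card_le {Γ : Type*} [Group Γ] (x : Γ) (H : Subgroup Γ)
    (hne : (Subgroup.centralizer {x}).relIndex H ≠ 0) :
    Set.Finite {w | ∃ s ∈ H, conj x s = w} ∧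
    Nat.card {w | ∃ s ∈ H, conj x s = w} ≤ (Subgroup.centralizer {x}).relIndex H := by
  classical
  set C := (Subgroup.centralizer {x}).subgroupOf H with hC
  haveI : C.FiniteIndex := ⟨hne⟩
  haveI : Finite (↥H ⧸ C) := Subgroup.finite_quotient_of_finiteIndex (H := C)
  set O : Set Γ := {w | ∃ s ∈ H, conj x s = w} with hO
  have wd : ∀ a b : ↥H, (QuotientGroup.leftRel C) a b →
      (fun a : ↥H => conj x ((↑(a⁻¹) : Γ))) a = (fun a : ↥H => conj x ((↑(a⁻¹) : Γ))) b := by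
    intro a b hab
    have hab' : a⁻¹ * b ∈ C := (QuotientGroup.leftRel_apply).mp hab
    have hc : ((a : Γ))⁻¹ * (b : Γ) ∈ Subgroup.centralizer {x} := hab'
    have hcomm : x * (((a : Γ))⁻¹ * (b : Γ)) = (((a : Γ))⁻¹ * (b : Γ)) * x :=
      Subgroup.mem_centralizer_iff.mp hc x (Set.mem_singleton x)
    simp only [conj]
    have := conj_comm_aux x (a : Γ) (b : Γ) hcomm
    simpa [mul_assoc] using this
  let fq : ↥H ⧸ C → Γ := Quotient.lift (fun a : ↥H => conj x ((↑(a⁻¹) : Γ))) wd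
  have hfq : ∀ a : ↥H, fq (QuotientGroup.mk a) = conj x ((↑(a⁻¹) : Γ)) := fun _ => rfl
  have hmem : ∀ q, fq q ∈ O := by
    intro q
    induction q using QuotientGroup.induction_on with | _ a =>
    exact ⟨(↑(a⁻¹) : Γ), (a⁻¹).2, rfl⟩
  let fq' : ↥H ⧸ C → O := fun q => ⟨fq q, hmem q⟩
  have hsurj : Function.Surjective fq' := by
    rintro ⟨w, s, hs, rfl⟩
    refine ⟨QuotientGroup.mk ((⟨s, hs⟩ : ↥H)⁻¹), Subtype.ext ?_⟩
    have := hfq ((⟨s, hs⟩ : ↥H)⁻¹)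
    simp only [inv_inv] at this
    exact this
  have hfin : Finite ↥O := Finite.of_surjective fq' hsurj
  refine ⟨Set.finite_coe_iff.mp hfin, ?_⟩
  calc Nat.card ↥O ≤ Nat.card (↥H ⧸ C) := Nat.card_le_card_of_surjective fq' hsurj
    _ = (Subgroup.centralizer {x}).relIndex H := rfl

end Generic




/-- Upper bound for the order of commutator subgroups arising in the proof. -/
noncomputable def Bb (m : ℕ) : ℕ :=
  (Finset.range ((m ^ (2 * m)) ^ 2 + 1)).sup Subgroup.cardCommutatorBound

/-- Common exponent for the torsion elements arising in the proof. -/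
noncomputable def Ee (m : ℕ) : ℕ := (Bb m).factorial

/-- If every tensor has centralizer of finite index in `ν(G)` and `m` is the maximum
of the indices of `C_{[G,G^φ]}(x)` in `[G,G^φ]` over tensors `x`, then for every
tensor `x` the subgroup `[[G,G^φ], x]` is finite of `m`-bounded order. -/
theorem commSub_tensor_finite : ∃ f : ℕ → ℕ, ∀ (G : Type u) [Group G] (m : ℕ),
    (∀ x ∈ tensorSet G, (Subgroup.centralizer {x}).index ≠ 0) →
    IsGreatest {k : ℕ | ∃ x ∈ tensorSet G,
        k = (Subgroup.centralizer {x}).relIndex (tensorSquare G)} m →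
    ∀ x ∈ tensorSet G,
      Finite (commSub (tensorSquare G : Set (Nu G)) x) ∧
      Nat.card (commSub (tensorSquare G : Set (Nu G)) x) ≤ f m := by
  classical
  refine ⟨fun m => Ee m ^ m * Bb m, ?_⟩
  intro G _ m hyp1 hypm x hx
  have hTS : tensorSquare G = Subgroup.closure (tensorSet G) := tensorSquare_eq_closure
  have hub : ∀ t ∈ tensorSet G,
      (Subgroup.centralizer {t}).relIndex (tensorSquare G) ≤ m :=
    fun t ht => hypm.2 ⟨t, ht, rfl⟩
  have hrne : ∀ t ∈ tensorSet G, ∀ K : Subgroup (Nu G),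
      (Subgroup.centralizer {t}).relIndex K ≠ 0 := by
    intro t ht K
    haveI : (Subgroup.centralizer {t}).FiniteIndex := ⟨hyp1 t ht⟩
    exact Subgroup.FiniteIndex.index_ne_zero
  have hmne : m ≠ 0 := by
    obtain ⟨x₀, hx₀, hm⟩ := hypm.1
    rw [hm]
    exact hrne x₀ hx₀ _
  have hm1 : 1 ≤ m := Nat.one_le_iff_ne_zero.mpr hmne
  have hEne : Ee m ≠ 0 := Nat.factorial_ne_zero _
  have hE1 : 1 ≤ Ee m := Nat.one_le_iff_ne_zero.mpr hEne
  have hcent : ∀ t ∈ tensorSet G, ∀ K : Subgroup (Nu G), K ≤ tensorSquare G →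
      (Subgroup.centralizer {t}).relIndex K ≤ m ∧
      (Subgroup.centralizer {t}).relIndex K ≠ 0 := by
    intro t ht K hKH
    exact ⟨(Subgroup.relIndex_le_of_le_right hKH (hrne t ht _)).trans (hub t ht),
      hrne t ht K⟩
  have hBb : ∀ S : Set (Nu G), S.Finite → Nat.card S ≤ 2 * m → S ⊆ tensorSet G →
      Finite (_root_.commutator ↥(Subgroup.closure S)) ∧
      Nat.card (_root_.commutator ↥(Subgroup.closure S)) ≤ Bb m := by
    intro S hfin hcard hsub
    have hle : Subgroup.closure S ≤ tensorSquare G := by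
      refine (Subgroup.closure_le _).mpr ?_
      intro t ht
      exact tensor_mem_tensorSquare (hsub ht)
    obtain ⟨h1, q, hq, hq2⟩ := card_commutator_closure_le S hfin (2 * m) m hm1 hcard
      (fun s hs => hcent s (hsub hs) _ hle)
    refine ⟨h1, hq2.trans ?_⟩
    exact Finset.le_sup (Finset.mem_range.mpr (Nat.lt_succ_of_le hq))
  have horb : ∀ y ∈ tensorSet G,
      Set.Finite {w | ∃ s ∈ tensorSquare G, conj y s = w} ∧
      Nat.card {w | ∃ s ∈ tensorSquare G, conj y s = w} ≤ m := by
    intro y hy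
    obtain ⟨h1, h2⟩ := orbit_card_le y (tensorSquare G) (hrne y hy _)
    exact ⟨h1, h2.trans (hub y hy)⟩
  have horbT : ∀ y ∈ tensorSet G,
      {w | ∃ s ∈ tensorSquare G, conj y s = w} ⊆ tensorSet G := by
    rintro y hy w ⟨s, hs, rfl⟩
    exact conj_tensor_mem hy s
  have horbself : ∀ y : Nu G, y ∈ {w | ∃ s ∈ tensorSquare G, conj y s = w} :=
    fun y => ⟨1, one_mem _, conj_one y⟩
  -- torsion of commutators of two tensors
  have htor : ∀ t' ∈ tensorSet G, ∀ y ∈ tensorSet G, (comm t' y) ^ Ee m = 1 := by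
    intro t' ht' y hy
    set Oy := {w | ∃ s ∈ tensorSquare G, conj y s = w} with hOy
    set Ot := {w | ∃ s ∈ tensorSquare G, conj t' s = w} with hOt
    set S₂ := Oy ∪ Ot with hS₂
    have hfin : S₂.Finite := ((horb y hy).1).union ((horb t' ht').1)
    have hcard : Nat.card S₂ ≤ 2 * m := by
      rw [Nat.card_coe_set_eq]
      calc S₂.ncard ≤ Oy.ncard + Ot.ncard := Set.ncard_union_le _ _
        _ ≤ m + m := by
            refine Nat.add_le_add ?_ ?_
            · rw [← Nat.card_coe_set_eq]; exact (horb y hy).2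
            · rw [← Nat.card_coe_set_eq]; exact (horb t' ht').2
        _ = 2 * m := (two_mul m).symm
    have hsub : S₂ ⊆ tensorSet G := Set.union_subset (horbT y hy) (horbT t' ht')
    obtain ⟨hDfin, hDcard⟩ := hBb S₂ hfin hcard hsub
    set K₂ := Subgroup.closure S₂ with hK₂
    have hyK : y ∈ K₂ := Subgroup.subset_closure (Set.mem_union_left _ (horbself y))
    have htK : t' ∈ K₂ := Subgroup.subset_closure (Set.mem_union_right _ (horbself t'))
    have hcK : comm t' y ∈ K₂ := by
      show t'⁻¹ * y⁻¹ * t' * y ∈ K₂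
      exact mul_mem (mul_mem (mul_mem (inv_mem htK) (inv_mem hyK)) htK) hyK
    have hccomm : (⟨comm t' y, hcK⟩ : ↥K₂) ∈ _root_.commutator ↥K₂ := by
      have heq : (⟨comm t' y, hcK⟩ : ↥K₂)
          = ⁅(⟨t', htK⟩ : ↥K₂)⁻¹, (⟨y, hyK⟩ : ↥K₂)⁻¹⁆ := by
        apply Subtype.ext
        show comm t' y = _
        rw [comm_eq_commutatorElement]
        rfl
      rw [heq]
      exact Subgroup.commutator_mem_commutator (Subgroup.mem_top _) (Subgroup.mem_top _)
    haveI := hDfin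
    have hdvd : orderOf (comm t' y) ∣ Nat.card ↥(_root_.commutator ↥K₂) := by
      have h2 := orderOf_dvd_natCard
        (⟨⟨comm t' y, hcK⟩, hccomm⟩ : ↥(_root_.commutator ↥K₂))
      rwa [Subgroup.orderOf_mk, Subgroup.orderOf_mk] at h2
    have hpos : 0 < Nat.card ↥(_root_.commutator ↥K₂) := Nat.card_pos
    have hordne : orderOf (comm t' y) ≠ 0 := by
      intro h0
      rw [h0] at hdvd
      exact hpos.ne' (Nat.eq_zero_of_zero_dvd hdvd)
    have hordle : orderOf (comm t' y) ≤ Bb m :=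
      (Nat.le_of_dvd hpos hdvd).trans hDcard
    exact orderOf_dvd_iff_pow_eq_one.mp
      (Nat.dvd_factorial (Nat.pos_of_ne_zero hordne) hordle)

  -- the orbit of x
  set O := {w | ∃ s ∈ tensorSquare G, conj x s = w} with hO
  have hOfin : O.Finite := (horb x hx).1
  have hOcard : Nat.card O ≤ m := (horb x hx).2
  have hOsubT : O ⊆ tensorSet G := horbT x hx
  have hxO : x ∈ O := horbself x
  have hOconj : ∀ y ∈ O, ∀ s ∈ tensorSquare G, conj y s ∈ O := by
    rintro y ⟨s₀, hs₀, rfl⟩ s hs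
    exact ⟨s₀ * s, mul_mem hs₀ hs, (conj_conj x s₀ s).symm⟩
  set N := Subgroup.closure O with hN
  have hON : O ⊆ ↑N := Subgroup.subset_closure
  have hmemN : ∀ u ∈ tensorSquare G, ∀ y ∈ O, comm u y ∈ N := by
    intro u hu y hy
    rw [comm_eq]
    exact mul_mem (inv_mem (hON (hOconj y hy u hu))) (hON hy)
  have hcard2m : Nat.card O ≤ 2 * m := hOcard.trans (by omega)
  obtain ⟨hDfin, hDcard⟩ := hBb O hOfin hcard2m hOsubT
  set π : ↥N →* Abelianization ↥N := Abelianization.of with hπ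
  have hker : ∀ d : ↥N, π d = 1 → d ∈ _root_.commutator ↥N := fun d h =>
    (QuotientGroup.eq_one_iff d).mp h
  -- the key induction: commutators with elements of the tensor square are E-torsion mod N'
  have hkey : ∀ s ∈ Subgroup.closure (tensorSet G), ∀ h ∈ tensorSquare G, ∀ y ∈ O,
      ∀ hc : comm (conj s h) y ∈ N, (π ⟨comm (conj s h) y, hc⟩) ^ Ee m = 1 := by
    intro s hs
    refine Subgroup.closure_induction (p := fun s _ => ∀ h ∈ tensorSquare G, ∀ y ∈ O,
        ∀ hc : comm (conj s h) y ∈ N, (π ⟨comm (conj s h) y, hc⟩) ^ Ee m = 1)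
      ?_ ?_ ?_ ?_ hs
    · intro t ht h hH y hy hc
      have h1 : (comm (conj t h) y) ^ Ee m = 1 := htor _ (conj_tensor_mem ht h) y (hOsubT hy)
      have h2 : (⟨comm (conj t h) y, hc⟩ : ↥N) ^ Ee m = 1 := by
        apply Subtype.ext
        rw [SubmonoidClass.coe_pow]
        simpa using h1
      rw [← map_pow, h2, map_one]
    · intro h hH y hy hc
      have h2 : (⟨comm (conj (1 : Nu G) h) y, hc⟩ : ↥N) = 1 := by
        apply Subtype.ext
        show comm (conj (1 : Nu G) h) y = 1
        rw [conj_one_left, comm_one_left]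
      rw [h2, map_one, one_pow]
    · intro s₁ s₂ hs₁ hs₂ ih₁ ih₂ h hH y hy hc
      have hs₂H : s₂ ∈ tensorSquare G := by rw [hTS]; exact hs₂
      have hs₁H : s₁ ∈ tensorSquare G := by rw [hTS]; exact hs₁
      have hvH : conj s₂ h ∈ tensorSquare G := by
        show h⁻¹ * s₂ * h ∈ tensorSquare G
        exact mul_mem (mul_mem (inv_mem hH) hs₂H) hH
      have hyv : conj y (conj s₂ h) ∈ O := hOconj y hy _ hvH
      have hhv : h * conj s₂ h ∈ tensorSquare G := mul_mem hH hvH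
      have hceq : comm (conj (s₁ * s₂) h) y
          = comm (conj s₁ (h * conj s₂ h)) (conj y (conj s₂ h)) * comm (conj s₂ h) y := by
        rw [conj_mul_left, comm_mul, conj_conj]
      have hc1 : comm (conj s₁ (h * conj s₂ h)) (conj y (conj s₂ h)) ∈ N := by
        refine hmemN _ ?_ _ hyv
        show (h * conj s₂ h)⁻¹ * s₁ * (h * conj s₂ h) ∈ tensorSquare G
        exact mul_mem (mul_mem (inv_mem hhv) hs₁H) hhv
      have hc2 : comm (conj s₂ h) y ∈ N := hmemN _ hvH y hy
      have hsplit : (⟨comm (conj (s₁ * s₂) h) y, hc⟩ : ↥N)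
          = ⟨_, hc1⟩ * ⟨_, hc2⟩ := by
        apply Subtype.ext
        rw [Subgroup.coe_mul]
        exact hceq
      rw [hsplit, map_mul, mul_pow, ih₁ _ hhv _ hyv hc1, ih₂ h hH y hy hc2, mul_one]
    · intro s hsmem ih h hH y hy hc
      have hsH : s ∈ tensorSquare G := by rw [hTS]; exact hsmem
      have huH : conj s h ∈ tensorSquare G := by
        show h⁻¹ * s * h ∈ tensorSquare G
        exact mul_mem (mul_mem (inv_mem hH) hsH) hH
      have hz : conj y (conj s h)⁻¹ ∈ O := hOconj y hy _ (inv_mem huH)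
      have hceq : comm (conj s⁻¹ h) y = (comm (conj s h) (conj y (conj s h)⁻¹))⁻¹ := by
        rw [conj_inv_left, comm_inv]
      have hc1 : comm (conj s h) (conj y (conj s h)⁻¹) ∈ N := hmemN _ huH _ hz
      have hsplit : (⟨comm (conj s⁻¹ h) y, hc⟩ : ↥N) = (⟨_, hc1⟩ : ↥N)⁻¹ := by
        apply Subtype.ext
        rw [Subgroup.coe_inv]
        exact hceq
      rw [hsplit, map_inv, inv_pow, ih h hH _ hz hc1, inv_one]
  -- the generating set of [H,x]
  set Sx := {c | ∃ s ∈ (tensorSquare G : Set (Nu G)), c = comm s x} with hSxdef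
  have hSxO : Sx = (fun y => y⁻¹ * x) '' O := by
    ext c
    constructor
    · rintro ⟨s, hs, rfl⟩
      exact ⟨conj x s, ⟨s, hs, rfl⟩, (comm_eq s x).symm⟩
    · rintro ⟨y, ⟨s, hs, rfl⟩, rfl⟩
      exact ⟨s, hs, (comm_eq s x).symm⟩
  have hSxfin : Sx.Finite := by rw [hSxO]; exact hOfin.image _
  have hSxN : Sx ⊆ ↑N := by
    rintro c ⟨s, hs, rfl⟩
    exact hmemN s hs x hxO
  set SN : Set ↥N := (N.subtype) ⁻¹' Sx with hSNdef
  set Phat : Subgroup ↥N := Subgroup.closure SN with hPhatdef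
  have himg : (N.subtype) '' SN = Sx := by
    ext c
    constructor
    · rintro ⟨d, hd, rfl⟩; exact hd
    · intro hcx; exact ⟨⟨c, hSxN hcx⟩, hcx, rfl⟩
  have hmap : Phat.map N.subtype = commSub (tensorSquare G : Set (Nu G)) x := by
    rw [hPhatdef, MonoidHom.map_closure, himg]
    rfl
  have ePhat := Subgroup.equivMapOfInjective Phat N.subtype (Subgroup.subtype_injective N)
  rw [hmap] at ePhat
  -- kernel of the abelianization restricted to Phat
  set ψ : ↥Phat →* Abelianization ↥N := π.comp Phat.subtype with hψ
  have hkerj : ∀ k : ↥(ψ.ker), ((Phat.subtype) (↑k : ↥Phat) : ↥N) ∈ _root_.commutator ↥N :=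
    fun k => hker _ k.2
  set j : ↥(ψ.ker) → ↥(_root_.commutator ↥N) :=
    fun k => ⟨(Phat.subtype) (↑k : ↥Phat), hkerj k⟩ with hjdef
  have hjinj : Function.Injective j := by
    intro k₁ k₂ hk
    have hk2 : ((j k₁ : ↥(_root_.commutator ↥N)) : ↥N)
        = ((j k₂ : ↥(_root_.commutator ↥N)) : ↥N) := congrArg Subtype.val hk
    have hk3 : (((k₁ : ↥Phat) : ↥N)) = (((k₂ : ↥Phat) : ↥N)) := hk2
    exact Subtype.ext (Subtype.ext hk3)
  haveI : Finite ↥(_root_.commutator ↥N) := hDfin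
  haveI hKkfin : Finite ↥(ψ.ker) := Finite.of_injective j hjinj
  have hKkcard : Nat.card ↥(ψ.ker) ≤ Bb m :=
    (Nat.card_le_card_of_injective j hjinj).trans hDcard
  -- range of ψ
  have hrange : ψ.range = Subgroup.closure (π '' SN) := by
    rw [hψ, MonoidHom.range_comp, Subgroup.range_subtype, hPhatdef, MonoidHom.map_closure]
  have hSNfin : SN.Finite :=
    hSxfin.preimage (Set.injOn_of_injective (Subgroup.subtype_injective N))
  have hSNcard : SN.ncard ≤ m := by
    have h1 : SN.ncard = Sx.ncard := by
      rw [← himg]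
      exact (Set.ncard_image_of_injective SN (Subgroup.subtype_injective N)).symm
    rw [h1, hSxO]
    refine (Set.ncard_image_le hOfin).trans ?_
    rw [← Nat.card_coe_set_eq]
    exact hOcard
  have hImfin : (π '' SN).Finite := hSNfin.image _
  have hImcard : (π '' SN).ncard ≤ m := (Set.ncard_image_le hSNfin).trans hSNcard
  have hImtor : ∀ z ∈ π '' SN, z ^ Ee m = 1 := by
    rintro z ⟨d, hd, rfl⟩
    obtain ⟨s, hs, hds⟩ := hd
    have hsc : s ∈ Subgroup.closure (tensorSet G) := by rw [← hTS]; exact hs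
    have hc : comm (conj s 1) x ∈ N := by
      rw [conj_one, ← hds]
      exact d.2
    have hkey1 := hkey s hsc 1 (one_mem _) x hxO hc
    have hd' : d = ⟨comm (conj s 1) x, hc⟩ := by
      apply Subtype.ext
      show (d : Nu G) = comm (conj s 1) x
      rw [conj_one]
      exact hds
    rw [hd']
    exact hkey1
  obtain ⟨hclofin, hclocard⟩ := card_closure_finset_le (Ee m) hEne hImfin.toFinset
    (fun a ha => hImtor a (hImfin.mem_toFinset.mp ha))
  rw [hImfin.coe_toFinset] at hclofin hclocard
  have htfcard : hImfin.toFinset.card ≤ m := by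
    rw [← Set.ncard_coe_finset, hImfin.coe_toFinset]
    exact hImcard
  have hclocard' : Nat.card (Subgroup.closure (π '' SN)) ≤ Ee m ^ m :=
    hclocard.trans (Nat.pow_le_pow_right hE1 htfcard)
  have equot : (↥Phat ⧸ ψ.ker) ≃* ψ.range := QuotientGroup.quotientKerEquivRange ψ
  haveI hfinrange : Finite ψ.range := by rw [hrange]; exact hclofin
  haveI hfinquot : Finite (↥Phat ⧸ ψ.ker) := Finite.of_equiv _ equot.toEquiv.symm
  have hcardquot : Nat.card (↥Phat ⧸ ψ.ker) ≤ Ee m ^ m := by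
    calc Nat.card (↥Phat ⧸ ψ.ker) = Nat.card ψ.range := Nat.card_congr equot.toEquiv
      _ = Nat.card (Subgroup.closure (π '' SN)) := by rw [hrange]
      _ ≤ Ee m ^ m := hclocard'
  haveI hfinPhat : Finite ↥Phat :=
    Finite.of_equiv _ (Subgroup.groupEquivQuotientProdSubgroup (s := ψ.ker)).symm
  have hfinal : Nat.card ↥Phat ≤ Ee m ^ m * Bb m := by
    rw [Subgroup.card_eq_card_quotient_mul_card_subgroup (ψ.ker)]
    exact Nat.mul_le_mul hcardquot hKkcard
  constructor
  · exact Finite.of_equiv _ ePhat.toEquiv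
  · have := Nat.card_congr ePhat.toEquiv
    rw [← this]
    exact hfinal

end TensorNu
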